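/- Let (Φ, ω): 𝕍 → 𝕍' be a morphism (Φ: V → V' linear, ω ∈ ∧²V*) and E ⊆ 𝕍 a Lagrangian subspace. Then the forward image E' = {w' ∈ 𝕍' : ∃ w ∈ E, w ~_{(Φ,ω)} w'} is a Lagrangian subspace of 𝕍'. Similarly, for F' ⊆ 𝕍' Lagrangian, the backward image F = {w ∈ 𝕍 : ∃ w' ∈ F', w ~_{(Φ,ω)} w'} is Lagrangian in 𝕍. -/

import Mathlib

open Module

/-- The relation `w ~_{(Φ,ω)} w'` defined by a morphism `(Φ, ω) : V ⊕ V* → V' ⊕ V'*`,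
with the 2-form `ω` encoded as a skew-symmetric map `ωm : V → V*` (so `ι(v)ω = ωm v`). -/
def morphRel {K V V' : Type*} [Field K] [AddCommGroup V] [Module K V]
    [AddCommGroup V'] [Module K V']
    (Φ : V →ₗ[K] V') (ωm : V →ₗ[K] Module.Dual K V)
    (w : V × Module.Dual K V) (w' : V' × Module.Dual K V') : Prop :=
  Φ w.1 = w'.1 ∧ w'.2.comp Φ = w.2 + ωm w.1

section Aux
variable {K : Type*} [Field K]

/-- Skew-symmetry from vanishing on the diagonal. -/
lemma aux_skew {V : Type*} [AddCommGroup V] [Module K V]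
    (ωm : V →ₗ[K] Dual K V) (halt : ∀ v, ωm v v = 0) (u v : V) :
    ωm u v = - ωm v u := by
  have h := halt (u + v)
  simp only [map_add, LinearMap.add_apply, halt] at h
  linear_combination h

/-- A set equal to its own pairing-orthogonal is a submodule. -/
def pairSub {V : Type*} [AddCommGroup V] [Module K V]
    (S : Set (V × Dual K V))
    (hS : ∀ w, w ∈ S ↔ ∀ u ∈ S, w.2 u.1 + u.2 w.1 = 0) :
    Submodule K (V × Dual K V) where
  carrier := S
  add_mem' := fun {a b} ha hb => (hS _).2 fun u hu => by
    have h1 := (hS a).1 ha u hu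
    have h2 := (hS b).1 hb u hu
    simp only [Prod.snd_add, Prod.fst_add, LinearMap.add_apply, map_add]
    linear_combination h1 + h2
  zero_mem' := (hS 0).2 fun u hu => by simp
  smul_mem' := fun c x hx => (hS _).2 fun u hu => by
    have h := (hS x).1 hx u hu
    simp only [Prod.smul_snd, Prod.smul_fst, LinearMap.smul_apply, map_smul, smul_eq_mul]
    linear_combination c * h

/-- A linear functional vanishing on the kernel of `P` factors through `P`. -/
lemma aux_factor {N Q : Type*} [AddCommGroup N] [Module K N] [AddCommGroup Q] [Module K Q]
    (P : N →ₗ[K] Q) (h : N →ₗ[K] K) (hk : ∀ n, P n = 0 → h n = 0) :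
    ∃ γ : Q →ₗ[K] K, ∀ n, γ (P n) = h n := by
  have hle : LinearMap.ker P ≤ LinearMap.ker h := fun n hn => hk n hn
  set h' : (N ⧸ LinearMap.ker P) →ₗ[K] K := (LinearMap.ker P).liftQ h hle with hh'
  set e := P.quotKerEquivRange
  obtain ⟨γ, hγ⟩ := LinearMap.exists_extend
    (h'.comp (e.symm : LinearMap.range P →ₗ[K] N ⧸ LinearMap.ker P))
  refine ⟨γ, fun n => ?_⟩
  calc γ (P n) = ((h'.comp (e.symm : LinearMap.range P →ₗ[K] N ⧸ LinearMap.ker P)))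
        ⟨P n, LinearMap.mem_range_self P n⟩ := by rw [← hγ]; rfl
    _ = h' (e.symm ⟨P n, LinearMap.mem_range_self P n⟩) := rfl
    _ = h n := by
        have : e.symm ⟨P n, LinearMap.mem_range_self P n⟩ = Submodule.Quotient.mk n := by
          rw [LinearEquiv.symm_apply_eq]
          exact Subtype.ext rfl
        rw [this, hh']
        simp

/-- Represent a functional as evaluation, given vanishing condition. -/
lemma aux_eval {M N : Type*} [AddCommGroup M] [Module K M] [FiniteDimensional K M]
    [AddCommGroup N] [Module K N]
    (T : N →ₗ[K] Dual K M) (f : N →ₗ[K] K) (h : ∀ n, T n = 0 → f n = 0) :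
    ∃ k : M, ∀ n, f n = T n k := by
  obtain ⟨γ, hγ⟩ := aux_factor T f h
  obtain ⟨k, hk⟩ := (Module.evalEquiv K M).surjective γ
  exact ⟨k, fun n => by rw [← hγ n, ← hk]; rfl⟩

/-- Membership in range via dual functionals. -/
lemma aux_mem_range {V V' : Type*} [AddCommGroup V] [Module K V]
    [AddCommGroup V'] [Module K V'] (Φ : V →ₗ[K] V') (x : V')
    (h : ∀ γ : Dual K V', γ.comp Φ = 0 → γ x = 0) : x ∈ LinearMap.range Φ := by
  set π := (LinearMap.range Φ).mkQ
  have hx : π x = 0 := by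
    rw [← Module.forall_dual_apply_eq_zero_iff K (π x)]
    intro f
    have : (f.comp π).comp Φ = 0 := by
      ext v
      have hv : (Submodule.Quotient.mk (Φ v) : V' ⧸ LinearMap.range Φ) = 0 :=
        (Submodule.Quotient.mk_eq_zero _).2 ⟨v, rfl⟩
      simp [π, Submodule.mkQ_apply, hv]
    exact h (f.comp π) this
  simpa [π, Submodule.Quotient.mk_eq_zero] using hx

end Aux

/-- for a morphism `(Φ, ω)` and Lagrangian subspaces `E ⊆ 𝕍`, `F' ⊆ 𝕍'`
(Lagrangian: equal to their own orthogonal with respect to the pairing form), the forward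
image of `E` is Lagrangian in `𝕍'` and the backward image of `F'` is Lagrangian in `𝕍`. -/
theorem pure_spinors_stmt8 {K V V' : Type*} [Field K] [CharZero K]
    [AddCommGroup V] [Module K V] [FiniteDimensional K V]
    [AddCommGroup V'] [Module K V'] [FiniteDimensional K V']
    (Φ : V →ₗ[K] V') (ωm : V →ₗ[K] Module.Dual K V) (halt : ∀ v, ωm v v = 0)
    (E : Set (V × Module.Dual K V)) (F' : Set (V' × Module.Dual K V'))
    (hE : ∀ w, w ∈ E ↔ ∀ u ∈ E, w.2 u.1 + u.2 w.1 = 0)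
    (hF' : ∀ w', w' ∈ F' ↔ ∀ u' ∈ F', w'.2 u'.1 + u'.2 w'.1 = 0) :
    (∀ w' : V' × Module.Dual K V',
      (∃ w ∈ E, morphRel Φ ωm w w') ↔
        ∀ u' : V' × Module.Dual K V', (∃ w ∈ E, morphRel Φ ωm w u') →
          w'.2 u'.1 + u'.2 w'.1 = 0) ∧
    (∀ w : V × Module.Dual K V,
      (∃ w' ∈ F', morphRel Φ ωm w w') ↔
        ∀ u : V × Module.Dual K V, (∃ u' ∈ F', morphRel Φ ωm u u') →
          w.2 u.1 + u.2 w.1 = 0) := by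
  have skew : ∀ u v : V, ωm u v = - ωm v u := aux_skew ωm halt
  set m1 : (V × Dual K V) →ₗ[K] Dual K V :=
    LinearMap.snd K V (Dual K V) + ωm.comp (LinearMap.fst K V (Dual K V)) with hm1
  have hm1a : ∀ w : V × Dual K V, m1 w = w.2 + ωm w.1 := fun w => rfl
  constructor
  · -- forward image
    intro w'
    constructor
    · rintro ⟨w, hwE, h1, h2⟩ u' ⟨u, huE, g1, g2⟩
      have hp := (hE w).1 hwE u huE
      have hw2 : w'.2 u'.1 = w.2 u.1 + ωm w.1 u.1 := by
        rw [← g1]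
        have := congrArg (fun φ : Dual K V => φ u.1) h2
        simpa using this
      have hu2 : u'.2 w'.1 = u.2 w.1 + ωm u.1 w.1 := by
        rw [← h1]
        have := congrArg (fun φ : Dual K V => φ w.1) g2
        simpa using this
      have hs := skew w.1 u.1
      rw [hw2, hu2]
      linear_combination hp + hs
    · intro hw'
      have hrange : w'.1 ∈ LinearMap.range Φ := by
        apply aux_mem_range
        intro γ hγ
        have h0 : (∃ w ∈ E, morphRel Φ ωm w ((0 : V'), γ)) := by
          refine ⟨0, (pairSub E hE).zero_mem, ?_, ?_⟩
          · simp
          · simpa using hγ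
        have := hw' ((0 : V'), γ) h0
        simpa using this
      obtain ⟨v₀, hv₀⟩ := hrange
      set ES := pairSub E hE with hES
      set T : ES →ₗ[K] Dual K (LinearMap.ker Φ) :=
        ((LinearMap.ker Φ).subtype.dualMap).comp (m1.comp ES.subtype) with hT
      set f : ES →ₗ[K] K :=
        (w'.2.comp (Φ.comp (LinearMap.fst K V (Dual K V))) +
          (Dual.eval K V v₀).comp m1).comp ES.subtype with hf
      have hfa : ∀ e : ES, f e = w'.2 (Φ (e : V × Dual K V).1) + m1 (e : V × Dual K V) v₀ :=
        fun e => rfl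
      have hTa : ∀ (e : ES) (k : LinearMap.ker Φ), T e k = m1 (e : V × Dual K V) (k : V) :=
        fun e k => rfl
      have hvanish : ∀ e : ES, T e = 0 → (-f) e = 0 := by
        intro e he
        have hker : ∀ u : V, Φ u = 0 → m1 (e : V × Dual K V) u = 0 := by
          intro u hu
          have := congrArg (fun φ : Dual K (LinearMap.ker Φ) => φ ⟨u, hu⟩) he
          simpa [hTa] using this
        obtain ⟨β', hβ'⟩ := aux_factor Φ (m1 (e : V × Dual K V)) hker
        have he' : (∃ w ∈ E, morphRel Φ ωm w (Φ (e : V × Dual K V).1, β')) := by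
          refine ⟨(e : V × Dual K V), e.2, rfl, ?_⟩
          ext u
          simpa [hm1a] using hβ' u
        have h0 := hw' _ he'
        have hb : β' w'.1 = m1 (e : V × Dual K V) v₀ := by rw [← hv₀]; exact hβ' v₀
        simp only [LinearMap.neg_apply, hfa, neg_eq_zero]
        rw [hb] at h0
        linear_combination h0
      obtain ⟨k, hk⟩ := aux_eval (K := K) (M := LinearMap.ker Φ) (N := ES) T (-f) hvanish
      refine ⟨(v₀ + (k : V), w'.2.comp Φ - ωm (v₀ + (k : V))), ?_, ?_, ?_⟩
      · refine (hE _).2 fun u hu => ?_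
        have hku := hk ⟨u, hu⟩
        rw [hTa ⟨u, hu⟩ k] at hku
        simp only [LinearMap.neg_apply, hfa] at hku
        have hs := skew (v₀ + (k : V)) u.1
        have hm1u : m1 u v₀ = u.2 v₀ + ωm u.1 v₀ := by rw [hm1a]; rfl
        have hm1k : m1 u (k : V) = u.2 (k : V) + ωm u.1 (k : V) := by rw [hm1a]; rfl
        rw [hm1u, hm1k] at hku
        have heval : ((w'.2.comp Φ - ωm (v₀ + (k : V))) : Dual K V) u.1
            = w'.2 (Φ u.1) - ωm (v₀ + (k : V)) u.1 := rfl
        have hsplit : ωm u.1 (v₀ + (k : V)) = ωm u.1 v₀ + ωm u.1 (k : V) := map_add _ _ _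
        have hadd : u.2 (v₀ + (k : V)) = u.2 v₀ + u.2 (k : V) := map_add _ _ _
        simp only [heval]
        linear_combination -hku - hs + hsplit + hadd
      · simp only [map_add, hv₀]
        have : Φ (k : V) = 0 := k.2
        rw [this, add_zero]
      · simp only
        abel
  · -- backward image
    intro w
    constructor
    · rintro ⟨w', hw'F, h1, h2⟩ u ⟨u', hu'F, g1, g2⟩
      have hp := (hF' w').1 hw'F u' hu'F
      have hw2 : w.2 u.1 = w'.2 u'.1 - ωm w.1 u.1 := by
        rw [← g1]
        have := congrArg (fun φ : Dual K V => φ u.1) h2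
        simp only [LinearMap.comp_apply, LinearMap.add_apply] at this
        linear_combination -this
      have hu2 : u.2 w.1 = u'.2 w'.1 - ωm u.1 w.1 := by
        rw [← h1]
        have := congrArg (fun φ : Dual K V => φ w.1) g2
        simp only [LinearMap.comp_apply, LinearMap.add_apply] at this
        linear_combination -this
      have hs := skew w.1 u.1
      rw [hw2, hu2]
      linear_combination hp - hs
    · intro hw
      have h0 : ∀ u : V, Φ u = 0 → (w.2 + ωm w.1) u = 0 := by
        intro k hk
        have hrel : (∃ u' ∈ F', morphRel Φ ωm (k, -(ωm k)) u') := by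
          refine ⟨0, (pairSub F' hF').zero_mem, ?_, ?_⟩
          · simpa using hk
          · simp
        have hq := hw (k, -(ωm k)) hrel
        simp only [LinearMap.neg_apply] at hq
        have hs := skew k w.1
        simp only [LinearMap.add_apply]
        linear_combination hq + hs
      obtain ⟨α₀, hα₀⟩ := aux_factor Φ (w.2 + ωm w.1) h0
      set FS := pairSub F' hF' with hFS
      set P : FS →ₗ[K] (V' ⧸ LinearMap.range Φ) :=
        ((LinearMap.range Φ).mkQ.comp (LinearMap.fst K V' (Dual K V'))).comp FS.subtype with hP
      set g : FS →ₗ[K] K :=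
        -((α₀.comp (LinearMap.fst K V' (Dual K V')) +
          (LinearMap.applyₗ (Φ w.1)).comp (LinearMap.snd K V' (Dual K V'))).comp
            FS.subtype) with hg
      have hga : ∀ u' : FS, g u' =
          -(α₀ (u' : V' × Dual K V').1 + (u' : V' × Dual K V').2 (Φ w.1)) := fun u' => rfl
      have hPa : ∀ u' : FS,
          P u' = Submodule.Quotient.mk (u' : V' × Dual K V').1 := fun u' => rfl
      have hvanish : ∀ u' : FS, P u' = 0 → g u' = 0 := by
        intro u' hu'
        have hmem : (u' : V' × Dual K V').1 ∈ LinearMap.range Φ := by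
          rw [hPa u', Submodule.Quotient.mk_eq_zero] at hu'
          exact hu'
        obtain ⟨u, hu⟩ := hmem
        have hrel : (∃ x ∈ F', morphRel Φ ωm
            (u, (u' : V' × Dual K V').2.comp Φ - ωm u) x) := by
          refine ⟨(u' : V' × Dual K V'), u'.2, hu, ?_⟩
          simp only
          abel
        have hq := hw _ hrel
        simp only [LinearMap.sub_apply, LinearMap.comp_apply] at hq
        rw [hga u']
        have hα := hα₀ u
        simp only [LinearMap.add_apply] at hα
        have hs := skew w.1 u
        rw [hu] at hα
        linear_combination -hα - hs - hq
      obtain ⟨γ, hγ⟩ := aux_factor (K := K) (N := FS) (Q := V' ⧸ LinearMap.range Φ) P g hvanish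
      refine ⟨(Φ w.1, α₀ + γ.comp (LinearMap.range Φ).mkQ), ?_, rfl, ?_⟩
      · refine (hF' _).2 fun u' hu' => ?_
        have hγu := hγ ⟨u', show u' ∈ FS from hu'⟩
        rw [hPa ⟨u', show u' ∈ FS from hu'⟩, hga ⟨u', show u' ∈ FS from hu'⟩] at hγu
        have heval : ((α₀ + γ.comp (LinearMap.range Φ).mkQ) : Dual K V') u'.1
            = α₀ u'.1 + γ (Submodule.Quotient.mk u'.1) := rfl
        rw [heval]
        linear_combination hγu
      · ext u
        have hz : (Submodule.Quotient.mk (Φ u) : V' ⧸ LinearMap.range Φ) = 0 :=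
          (Submodule.Quotient.mk_eq_zero _).2 ⟨u, rfl⟩
        have hα := hα₀ u
        simp only [LinearMap.add_apply] at hα
        simp only [LinearMap.comp_apply, LinearMap.add_apply, Submodule.mkQ_apply, hz,
          map_zero, add_zero]
        exact hα
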